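/- If k ≥ 4 and T ≠ K_k is a Gallai tree (a connected graph in which every block is a complete graph or an odd cycle) with maximum degree at most k−1, then 2·e(T) ≤ (k−2)·|V(T)| + 2·β_k(T), where β_k(T) is the independence number of the subgraph of T induced on the vertices of degree exactly k−1. -/

import Mathlib

open SimpleGraph

namespace Paper

variable {V : Type*} {W : Type*}

/-- `s` is an independent set in `G`. -/
def IsIndepSet (G : SimpleGraph V) (s : Set V) : Prop :=
  ∀ ⦃u⦄, u ∈ s → ∀ ⦃v⦄, v ∈ s → ¬ G.Adj u v

/-- The independence number of `G`. -/
noncomputable def indepNum (G : SimpleGraph V) : ℕ :=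
  sSup {n | ∃ s : Finset V, IsIndepSet G ↑s ∧ s.card = n}

/-- The number of edges of `G`. -/
noncomputable def edgeCount (G : SimpleGraph V) : ℕ := Nat.card G.edgeSet

/-- The degree of a vertex. -/
noncomputable def deg (G : SimpleGraph V) (v : V) : ℕ := Nat.card (G.neighborSet v)

/-- The number of edges with exactly one endpoint in `I`. -/
noncomputable def crossCount (G : SimpleGraph V) (I : Set V) : ℕ :=
  Nat.card {p : V × V // p.1 ∈ I ∧ p.2 ∉ I ∧ G.Adj p.1 p.2}

/-- The maximum independent cover number of `G`. -/
noncomputable def mic (G : SimpleGraph V) : ℕ :=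
  sSup {n | ∃ I : Set V, IsIndepSet G I ∧ crossCount G I = n}

/-- A graph is an odd cycle iff it is connected, 2-regular, with an odd number of vertices. -/
def IsOddCycle (H : SimpleGraph W) : Prop :=
  H.Connected ∧ (∀ v, deg H v = 2) ∧ Odd (Nat.card W)

/-- `B` is a block of `G`: a maximal set inducing a connected subgraph with no cutvertex. -/
def IsBlock (G : SimpleGraph V) (B : Set V) : Prop :=
  ((G.induce B).Connected ∧ ∀ v ∈ B, (G.induce (B \ {v})).Connected) ∧
    ∀ B' : Set V, B ⊆ B' →
      ((G.induce B').Connected ∧ ∀ v ∈ B', (G.induce (B' \ {v})).Connected) → B' = B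

/-- A Gallai tree: a connected graph each of whose blocks is complete or an odd cycle. -/
def IsGallaiTree (G : SimpleGraph V) : Prop :=
  G.Connected ∧ ∀ B : Set V, IsBlock G B → (G.induce B = ⊤ ∨ IsOddCycle (G.induce B))

/-- `G` is `r`-choosable: every assignment of lists of size `r` admits a proper coloring. -/
def Choosable (G : SimpleGraph V) (r : ℕ) : Prop :=
  ∀ L : V → Finset ℕ, (∀ v, (L v).card = r) →
    ∃ c : V → ℕ, (∀ v, c v ∈ L v) ∧ ∀ ⦃u v⦄, G.Adj u v → c u ≠ c v

/-- `G` is `k`-list-critical: not `(k-1)`-choosable but every proper subgraph is. -/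
def ListCritical (k : ℕ) (G : SimpleGraph V) : Prop :=
  ¬ Choosable G (k - 1) ∧ ∀ H : G.Subgraph, H ≠ ⊤ → Choosable H.coe (k - 1)

end Paper

open Paper

namespace Paper

open SimpleGraph Set

variable {V : Type*} {T : SimpleGraph V}

/-! ### Reachability within a vertex set -/

def Link (T : SimpleGraph V) (S : Set V) (a b : V) : Prop := a ∈ S ∧ b ∈ S ∧ T.Adj a b

def ReachIn (T : SimpleGraph V) (S : Set V) : V → V → Prop := Relation.ReflTransGen (Link T S)

lemma ReachIn.refl {S : Set V} {u : V} : ReachIn T S u u := Relation.ReflTransGen.refl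

lemma ReachIn.tail {S : Set V} {u b c : V} (h : ReachIn T S u b) (hb : b ∈ S) (hc : c ∈ S)
    (hadj : T.Adj b c) : ReachIn T S u c := Relation.ReflTransGen.tail h ⟨hb, hc, hadj⟩

lemma ReachIn.head {S : Set V} {u b c : V} (hb : u ∈ S) (hc : b ∈ S)
    (hadj : T.Adj u b) (h : ReachIn T S b c) : ReachIn T S u c :=
  Relation.ReflTransGen.head ⟨hb, hc, hadj⟩ h

lemma reachIn_mono {S₁ S₂ : Set V} (h : S₁ ⊆ S₂) {u w : V} (hr : ReachIn T S₁ u w) :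
    ReachIn T S₂ u w :=
  Relation.ReflTransGen.mono (fun _ _ (hab : Link T S₁ _ _) => (⟨h hab.1, h hab.2.1, hab.2.2⟩ : Link T S₂ _ _)) u w hr

lemma reachable_induce_of_reachIn {S : Set V} {u w : V} (h : ReachIn T S u w) :
    ∀ (hu : u ∈ S) (hw : w ∈ S), (T.induce S).Reachable ⟨u, hu⟩ ⟨w, hw⟩ := by
  induction h with
  | refl => intro hu hw; rfl
  | tail _h hl ih =>
      intro hu hw
      exact (ih hu hl.1).trans (SimpleGraph.Adj.reachable (by simpa using hl.2.2))

lemma reachIn_of_reachable_induce {S : Set V} {u w : ↥S} (h : (T.induce S).Reachable u w) :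
    ReachIn T S ↑u ↑w := by
  obtain ⟨p⟩ := h
  induction p with
  | nil => exact ReachIn.refl
  | @cons a b c hadj _p ih =>
      exact ReachIn.head a.2 b.2 (by simpa using hadj) ih

lemma induce_connected_iff {S : Set V} :
    (T.induce S).Connected ↔ S.Nonempty ∧ ∀ u ∈ S, ∀ w ∈ S, ReachIn T S u w := by
  constructor
  · intro h
    refine ⟨?_, fun u hu w hw => ?_⟩
    · obtain ⟨⟨v, hv⟩⟩ := h.nonempty; exact ⟨v, hv⟩
    · exact reachIn_of_reachable_induce (h.preconnected ⟨u, hu⟩ ⟨w, hw⟩)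
  · rintro ⟨⟨v, hv⟩, h⟩
    rw [connected_iff]
    exact ⟨fun u w => ((reachable_induce_of_reachIn (h v hv u u.2) hv u.2).symm).trans
      (reachable_induce_of_reachIn (h v hv w w.2) hv w.2), ⟨⟨v, hv⟩⟩⟩

lemma induce_connected_of_reach_to_hub {S : Set V} {x : V} (hx : x ∈ S)
    (h : ∀ u ∈ S, ReachIn T S u x) : (T.induce S).Connected := by
  rw [connected_iff]
  refine ⟨fun u w => ?_, ⟨⟨x, hx⟩⟩⟩
  have h1 := reachable_induce_of_reachIn (h u u.2) u.2 hx
  have h2 := reachable_induce_of_reachIn (h w w.2) w.2 hx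
  simpa using h1.trans h2.symm


lemma induce_connected_of_hub_from {T : SimpleGraph V} {S : Set V} {x : V} (hx : x ∈ S)
    (h : ∀ u ∈ S, ReachIn T S x u) : (T.induce S).Connected := by
  rw [SimpleGraph.connected_iff]
  refine ⟨fun u w => ?_, ⟨⟨x, hx⟩⟩⟩
  have h1 := reachable_induce_of_reachIn (h u u.2) hx u.2
  have h2 := reachable_induce_of_reachIn (h w w.2) hx w.2
  simpa using h1.symm.trans h2

lemma eq_univ_of_closed (hT : T.Connected) {K : Set V} (hK : K.Nonempty)
    (hcl : ∀ a ∈ K, ∀ b, T.Adj a b → b ∈ K) : K = Set.univ := by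
  obtain ⟨u, hu⟩ := hK
  ext w
  simp only [Set.mem_univ, iff_true]
  have hr : Relation.ReflTransGen T.Adj u w :=
    (reachable_iff_reflTransGen u w).mp (hT.preconnected u w)
  induction hr with
  | refl => exact hu
  | tail _h hadj ih => exact hcl _ ih _ hadj

lemma reachIn_restrict {S : Set V} {u w : V} (hu : u ∈ S) (h : ReachIn T S u w) :
    ReachIn T {z | z ∈ S ∧ ReachIn T S u z} u w := by
  induction h with
  | refl => exact ReachIn.refl
  | @tail b c h hl ih => exact ReachIn.tail ih ⟨hl.1, h⟩ ⟨hl.2.1, ReachIn.tail h hl.1 hl.2.1 hl.2.2⟩ hl.2.2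

/-- vertices reachable from a set `A` with closed neighborhoods (apart from `x`) stay in `A`. -/
lemma reach_stay {A : Set V} {x : V} (hcl : ∀ a ∈ A, ∀ b, T.Adj a b → b ∈ A ∪ {x})
    {W : Set V} (hxW : x ∉ W) {u w : V} (h : ReachIn T W u w) (hu : u ∈ A) : w ∈ A := by
  induction h with
  | refl => exact hu
  | @tail b c _h hl ih =>
      rcases hcl _ ih _ hl.2.2 with hc | hc
      · exact hc
      · exact absurd (hc ▸ hl.2.1) hxW

end Paper


namespace Paper

open SimpleGraph Set

variable {V : Type*} {T : SimpleGraph V}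

/-! ### Blocks via the 2-connectivity property -/

def PP (T : SimpleGraph V) (C : Set V) : Prop :=
  (T.induce C).Connected ∧ ∀ v ∈ C, (T.induce (C \ {v})).Connected

lemma isBlock_iff {B : Set V} :
    IsBlock T B ↔ PP T B ∧ ∀ B' : Set V, B ⊆ B' → PP T B' → B' = B := Iff.rfl

lemma PP.nontrivial {C : Set V} (h : PP T C) : ∃ u ∈ C, ∃ w ∈ C, u ≠ w := by
  obtain ⟨u, hu⟩ := (induce_connected_iff.mp h.1).1
  by_contra hcon
  push_neg at hcon
  have h2 := (h.2 u hu)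
  obtain ⟨w, hw⟩ := (induce_connected_iff.mp h2).1
  exact hw.2 (by simp [(hcon u hu w hw.1).symm])

lemma PP.two_le_ncard {C : Set V} (h : PP T C) (hfin : C.Finite) : 2 ≤ C.ncard := by
  obtain ⟨u, hu, w, hw, huw⟩ := h.nontrivial
  exact (Set.one_lt_ncard_iff hfin).mpr ⟨u, w, hu, hw, huw⟩

/-! ### Good pairs -/

def GoodPair (T : SimpleGraph V) (x : V) (A : Set V) : Prop :=
  A.Nonempty ∧ x ∉ A ∧ (T.induce A).Connected ∧ (∃ a ∈ A, T.Adj x a) ∧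
    ∀ a ∈ A, ∀ b, T.Adj a b → b ∈ A ∪ {x}

lemma exists_goodPair (hT : T.Connected) {u x : V} (hux : u ≠ x) :
    ∃ x' A', GoodPair T x' A' := by
  refine ⟨x, {z | z ∈ ({x}ᶜ : Set V) ∧ ReachIn T {x}ᶜ u z}, ?_, ?_, ?_, ?_, ?_⟩
  · exact ⟨u, show _ ∧ _ from ⟨hux, ReachIn.refl⟩⟩
  · simp
  · refine induce_connected_of_hub_from
      (show u ∈ _ from ⟨hux, ReachIn.refl⟩) (fun w hw => ?_)
    exact reachIn_restrict (show u ∈ ({x}ᶜ : Set V) from hux) hw.2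
  · by_contra hcon
    push_neg at hcon
    have hcl : ∀ a ∈ {z | z ∈ ({x}ᶜ : Set V) ∧ ReachIn T {x}ᶜ u z}, ∀ b, T.Adj a b →
        b ∈ {z | z ∈ ({x}ᶜ : Set V) ∧ ReachIn T {x}ᶜ u z} := by
      intro a ha b hadj
      have hbx : b ≠ x := by
        rintro rfl
        exact hcon a ha hadj.symm
      exact show _ ∧ _ from ⟨hbx, ReachIn.tail ha.2 ha.1 hbx hadj⟩
    have := eq_univ_of_closed hT ⟨u, show _ ∧ _ from ⟨hux, ReachIn.refl⟩⟩ hcl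
    have hx : x ∈ {z | z ∈ ({x}ᶜ : Set V) ∧ ReachIn T {x}ᶜ u z} := this ▸ Set.mem_univ x
    exact hx.1 rfl
  · intro a ha b hadj
    by_cases hbx : b = x
    · exact Or.inr (by simp [hbx])
    · exact Or.inl (show _ ∧ _ from ⟨hbx, ReachIn.tail ha.2 ha.1 hbx hadj⟩)

end Paper


namespace Paper

open SimpleGraph Set

variable {V : Type*} {T : SimpleGraph V}

lemma exists_minimal_goodPair (h : ∃ x A, GoodPair T x A) :
    ∃ x A, GoodPair T x A ∧ ∀ v K, GoodPair T v K → A.ncard ≤ K.ncard := by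
  obtain ⟨x, A, hp⟩ := h
  obtain ⟨x', A', hp', hcard⟩ := Nat.sInf_mem (⟨A.ncard, x, A, hp, rfl⟩ :
    Set.Nonempty {n | ∃ x A, GoodPair T x A ∧ A.ncard = n})
  exact ⟨x', A', hp', fun v K hK => hcard ▸ Nat.sInf_le ⟨v, K, hK, rfl⟩⟩

lemma block_of_minimal [Finite V] (hT : T.Connected) {x : V} {A : Set V}
    (hp : GoodPair T x A)
    (hmin : ∀ v K, GoodPair T v K → A.ncard ≤ K.ncard) :
    IsBlock T (A ∪ {x}) := by
  obtain ⟨⟨a₀, ha₀⟩, hxA, hAconn, ⟨a₁, ha₁, hxa₁⟩, hcl⟩ := hp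
  have hxB : x ∈ A ∪ {x} := Or.inr rfl
  have reachB : ∀ w ∈ A ∪ {x}, ReachIn T (A ∪ {x}) x w := by
    rintro w (hw | hw)
    · have h1 : ReachIn T A a₁ w := (induce_connected_iff.mp hAconn).2 a₁ ha₁ w hw
      exact ReachIn.head hxB (Or.inl ha₁) hxa₁ (reachIn_mono Set.subset_union_left h1)
    · simp only [Set.mem_singleton_iff] at hw
      rw [hw]; exact ReachIn.refl
  have hBconn : (T.induce (A ∪ {x})).Connected := induce_connected_of_hub_from hxB reachB
  refine ⟨⟨hBconn, ?_⟩, ?_⟩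
  · intro v hv
    by_cases hvx : v = x
    · subst hvx
      have hAe : (A ∪ {v}) \ {v} = A := by
        ext z
        simp only [Set.mem_diff, Set.mem_union, Set.mem_singleton_iff]
        exact ⟨fun h => h.1.resolve_right h.2, fun h => ⟨Or.inl h, fun hzv => hxA (hzv ▸ h)⟩⟩
      rw [hAe]; exact hAconn
    · have hvA : v ∈ A := hv.resolve_right (by simpa using hvx)
      by_contra hnc
      have hxBv : x ∈ (A ∪ {x}) \ {v} := ⟨hxB, by simp [Ne.symm hvx]⟩
      have hnall : ¬ ∀ u ∈ (A ∪ {x}) \ {v}, ReachIn T ((A ∪ {x}) \ {v}) u x := fun hall =>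
        hnc (induce_connected_of_reach_to_hub hxBv hall)
      push_neg at hnall
      obtain ⟨u₀, hu₀, hnr⟩ := hnall
      set W := (A ∪ {x}) \ {v} with hWdef
      set K := {z | z ∈ W ∧ ReachIn T W u₀ z} with hKdef
      have hu₀x : u₀ ≠ x := by rintro rfl; exact hnr ReachIn.refl
      have hu₀A : u₀ ∈ A := hu₀.1.resolve_right (by simpa using hu₀x)
      have hu₀K : u₀ ∈ K := show _ ∧ _ from ⟨hu₀, ReachIn.refl⟩
      have hxK : x ∉ K := fun hx => hnr hx.2
      have hvK : v ∉ K := fun h => h.1.2 rfl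
      have hKA : K ⊆ A \ {v} := by
        intro z hz
        have hzx : z ≠ x := fun h => hxK (h ▸ hz)
        exact ⟨hz.1.1.resolve_right (by simpa using hzx), hz.1.2⟩
      have hKclosure : ∀ a ∈ K, ∀ b, T.Adj a b → b ∈ K ∪ {v} := by
        intro a ha b hadj
        by_cases hbv : b = v
        · exact Or.inr (by simp [hbv])
        · have haA : a ∈ A := (hKA ha).1
          have hbB : b ∈ A ∪ {x} := hcl a haA b hadj
          have hbW : b ∈ W := ⟨hbB, by simpa using hbv⟩
          exact Or.inl (show _ ∧ _ from ⟨hbW, ReachIn.tail ha.2 ha.1 hbW hadj⟩)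
      have hgp : GoodPair T v K := by
        refine ⟨⟨u₀, hu₀K⟩, hvK, ?_, ?_, hKclosure⟩
        · exact induce_connected_of_hub_from hu₀K (fun w hw => reachIn_restrict hu₀ hw.2)
        · by_contra hcon
          push_neg at hcon
          have hclosed : ∀ a ∈ K, ∀ b, T.Adj a b → b ∈ K := by
            intro a ha b hadj
            rcases hKclosure a ha b hadj with hb | hb
            · exact hb
            · simp only [Set.mem_singleton_iff] at hb
              exact absurd (hb ▸ hadj).symm (hcon a ha)
          have := eq_univ_of_closed hT ⟨u₀, hu₀K⟩ hclosed
          exact hvK (this ▸ Set.mem_univ v)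
      have hA1 : 1 ≤ A.ncard := (Set.ncard_pos (Set.toFinite _)).mpr ⟨a₀, ha₀⟩
      have hle : K.ncard ≤ (A \ {v}).ncard := Set.ncard_le_ncard hKA (Set.toFinite _)
      have hdiff : (A \ {v}).ncard = A.ncard - 1 := Set.ncard_diff_singleton_of_mem hvA
      have := hmin v K hgp
      omega
  · intro B' hBB' hPP'
    refine Set.Subset.antisymm ?_ hBB'
    intro z hz
    by_contra hzB
    have hzx : z ≠ x := fun h => hzB (h ▸ hxB)
    have hzA : z ∉ A := fun h => hzB (Or.inl h)
    have ha₀x : a₀ ≠ x := fun h => hxA (h ▸ ha₀)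
    have hconn' := hPP'.2 x (hBB' hxB)
    have hreach := (induce_connected_iff.mp hconn').2 a₀
      ⟨hBB' (Or.inl ha₀), by simpa using ha₀x⟩ z ⟨hz, by simpa using hzx⟩
    exact hzA (reach_stay hcl (by simp) hreach ha₀)

end Paper


namespace Paper

open SimpleGraph Set

variable {V : Type*} {T : SimpleGraph V}

/-! ### Isomorphism transport -/

noncomputable def induceInduceIso (T : SimpleGraph V) (S : Set V) (B₂ : Set ↥S) :
    (T.induce S).induce B₂ ≃g T.induce (Subtype.val '' B₂) where
  toEquiv := Equiv.Set.image Subtype.val B₂ Subtype.val_injective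
  map_rel_iff' := Iff.rfl

lemma iso_top {α β : Type*} {G : SimpleGraph α} {H : SimpleGraph β} (e : G ≃g H)
    (h : G = ⊤) : H = ⊤ := by
  subst h
  ext u w
  have h1 : H.Adj u w ↔ (⊤ : SimpleGraph α).Adj (e.symm u) (e.symm w) := e.symm.map_rel_iff.symm
  rw [h1]
  simp [e.symm.toEquiv.injective.ne_iff]

lemma deg_iso {α β : Type*} {G : SimpleGraph α} {H : SimpleGraph β} (e : G ≃g H) (v : α) :
    deg H (e v) = deg G v := (Nat.card_congr (e.mapNeighborSet v)).symm

lemma isOddCycle_of_iso {α β : Type*} {G : SimpleGraph α} {H : SimpleGraph β} (e : G ≃g H)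
    (h : IsOddCycle G) : IsOddCycle H := by
  refine ⟨e.connected_iff.mp h.1, fun v => ?_, ?_⟩
  · have := deg_iso e (e.symm v)
    rw [e.apply_symm_apply] at this
    rw [this]; exact h.2.1 _
  · rw [← Nat.card_congr e.toEquiv]; exact h.2.2

lemma pp_image_iff {S : Set V} (B₂ : Set ↥S) :
    PP (T.induce S) B₂ ↔ PP T (Subtype.val '' B₂) := by
  have himg : ∀ v : ↥S, Subtype.val '' (B₂ \ {v}) = Subtype.val '' B₂ \ {(v : V)} := by
    intro v
    rw [Set.image_diff Subtype.val_injective, Set.image_singleton]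
  constructor
  · intro h
    refine ⟨(induceInduceIso T S B₂).connected_iff.mp h.1, ?_⟩
    rintro v' ⟨v, hv, rfl⟩
    have := (induceInduceIso T S (B₂ \ {v})).connected_iff.mp (h.2 v hv)
    rwa [himg v] at this
  · intro h
    refine ⟨(induceInduceIso T S B₂).connected_iff.mpr h.1, ?_⟩
    intro v hv
    refine (induceInduceIso T S (B₂ \ {v})).connected_iff.mpr ?_
    rw [himg v]
    exact h.2 _ (Set.mem_image_of_mem _ hv)

lemma isGallaiTree_induce [Finite V] (hG : IsGallaiTree T) (S : Set V)
    (hconn : (T.induce S).Connected)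
    (hsep : ∀ C : Set V, PP T C → ¬ C ⊆ S → (C ∩ S).ncard ≤ 1) :
    IsGallaiTree (T.induce S) := by
  refine ⟨hconn, fun B₂ hB₂ => ?_⟩
  have hPP2 : PP T (Subtype.val '' B₂) := (pp_image_iff B₂).mp hB₂.1
  have h2card : 2 ≤ (Subtype.val '' B₂).ncard := hPP2.two_le_ncard (Set.toFinite _)
  have himageS : (Subtype.val '' B₂) ⊆ S := by rintro z ⟨w, hw, rfl⟩; exact w.2
  have hblock : IsBlock T (Subtype.val '' B₂) := by
    refine ⟨hPP2, fun C'' hsub hPP'' => ?_⟩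
    have hCS : C'' ⊆ S := by
      by_contra hnot
      have h1 := hsep C'' hPP'' hnot
      have h2 : 2 ≤ (C'' ∩ S).ncard := le_trans h2card
        (Set.ncard_le_ncard (Set.subset_inter hsub himageS) (Set.toFinite _))
      omega
    set B₂'' : Set ↥S := Subtype.val ⁻¹' C'' with hB₂''
    have himg : Subtype.val '' B₂'' = C'' := by
      rw [hB₂'', Subtype.image_preimage_coe]
      exact Set.inter_eq_right.mpr hCS
    have hPPb : PP (T.induce S) B₂'' := (pp_image_iff B₂'').mpr (himg ▸ hPP'')
    have hBsub : B₂ ⊆ B₂'' := fun u hu => hsub (Set.mem_image_of_mem _ hu)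
    have heq := hB₂.2 B₂'' hBsub hPPb
    rw [← himg, heq]
  rcases hG.2 _ hblock with htop | hodd
  · exact Or.inl (iso_top (induceInduceIso T S B₂).symm htop)
  · exact Or.inr (isOddCycle_of_iso (induceInduceIso T S B₂).symm hodd)

end Paper


namespace Paper

open SimpleGraph Set

variable {V : Type*} {T : SimpleGraph V}

/-! ### Separation lemmas -/

lemma sepA {x : V} {A : Set V} (hxA : x ∉ A)
    (hcl : ∀ a ∈ A, ∀ b, T.Adj a b → b ∈ A ∪ {x}) {C : Set V} (hPP : PP T C)
    {a : V} (haC : a ∈ C) (haA : a ∈ A) : C ⊆ A ∪ {x} := by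
  by_contra hnot2
  rw [Set.not_subset] at hnot2
  obtain ⟨z, hzC, hzB⟩ := hnot2
  have hzA : z ∉ A := fun h => hzB (Or.inl h)
  have hzx : z ≠ x := fun h => hzB (Or.inr (by simp [h]))
  have hWconn : (T.induce (C \ {x})).Connected := by
    by_cases hxC : x ∈ C
    · exact hPP.2 x hxC
    · rw [Set.diff_singleton_eq_self hxC]; exact hPP.1
  have hax : a ≠ x := fun h => hxA (h ▸ haA)
  have hreach := (induce_connected_iff.mp hWconn).2 a ⟨haC, by simpa using hax⟩
    z ⟨hzC, by simpa using hzx⟩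
  exact hzA (reach_stay hcl (by simp) hreach haA)

lemma hsepA {x : V} {A : Set V} (hxA : x ∉ A)
    (hcl : ∀ a ∈ A, ∀ b, T.Adj a b → b ∈ A ∪ {x}) :
    ∀ C : Set V, PP T C → ¬ C ⊆ Aᶜ → (C ∩ Aᶜ).ncard ≤ 1 := by
  intro C hPP hnot
  obtain ⟨a, haC, haA⟩ : ∃ a, a ∈ C ∧ a ∈ A := by
    rw [Set.not_subset] at hnot
    obtain ⟨a, h1, h2⟩ := hnot
    exact ⟨a, h1, not_not.mp h2⟩
  have hCB := sepA hxA hcl hPP haC haA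
  have hsub : C ∩ Aᶜ ⊆ {x} := by
    rintro c ⟨hcC, hcA⟩
    rcases hCB hcC with h | h
    · exact absurd h hcA
    · exact h
  calc (C ∩ Aᶜ).ncard ≤ ({x} : Set V).ncard := Set.ncard_le_ncard hsub (Set.toFinite _)
    _ = 1 := Set.ncard_singleton x

lemma hsepB {x y : V} {A : Set V} (hxA : x ∉ A)
    (hcl : ∀ a ∈ A, ∀ b, T.Adj a b → b ∈ A ∪ {x})
    (hNx : ∀ b, T.Adj x b → b ∈ A ∪ {y}) (hxy : x ≠ y) :
    ∀ C : Set V, PP T C → ¬ C ⊆ (A ∪ {x})ᶜ → (C ∩ (A ∪ {x})ᶜ).ncard ≤ 1 := by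
  intro C hPP hnot
  obtain ⟨c, hcC, hcB⟩ : ∃ c, c ∈ C ∧ c ∈ A ∪ {x} := by
    rw [Set.not_subset] at hnot
    obtain ⟨c, h1, h2⟩ := hnot
    exact ⟨c, h1, not_not.mp h2⟩
  by_cases hCA : ∃ a, a ∈ C ∧ a ∈ A
  · obtain ⟨a, haC, haA⟩ := hCA
    have hCB := sepA hxA hcl hPP haC haA
    have hsub : C ∩ (A ∪ {x})ᶜ ⊆ (∅ : Set V) := by
      rintro z ⟨hzC, hzB⟩
      exact absurd (hCB hzC) hzB
    calc (C ∩ (A ∪ {x})ᶜ).ncard ≤ (∅ : Set V).ncard :=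
          Set.ncard_le_ncard hsub (Set.toFinite _)
      _ ≤ 1 := by simp
  · push_neg at hCA
    have hxC : x ∈ C := by
      rcases hcB with h | h
      · exact absurd h (hCA c hcC)
      · exact h ▸ hcC
    have hsub2 : C ⊆ {x, y} := by
      by_contra h2
      rw [Set.not_subset] at h2
      obtain ⟨z, hzC, hz2⟩ := h2
      have hzx : z ≠ x := fun h => hz2 (by simp [h])
      have hzy : z ≠ y := fun h => hz2 (by simp [h])
      have hWconn : (T.induce (C \ {y})).Connected := by
        by_cases hyC : y ∈ C
        · exact hPP.2 y hyC
        · rw [Set.diff_singleton_eq_self hyC]; exact hPP.1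
      have hreach := (induce_connected_iff.mp hWconn).2 x ⟨hxC, by simpa using hxy⟩
        z ⟨hzC, by simpa using hzy⟩
      rcases Relation.ReflTransGen.cases_head hreach with heq | ⟨b, hlink, _⟩
      · exact hzx heq.symm
      · rcases hNx b hlink.2.2 with hbA | hby
        · exact hCA b hlink.2.1.1 hbA
        · exact hlink.2.1.2 hby
    have hsub : C ∩ (A ∪ {x})ᶜ ⊆ {y} := by
      rintro z ⟨hzC, hzB⟩
      rcases hsub2 hzC with h | h
      · exact absurd (by simp [h] : z ∈ A ∪ {x}) hzB
      · exact h
    calc (C ∩ (A ∪ {x})ᶜ).ncard ≤ ({y} : Set V).ncard :=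
          Set.ncard_le_ncard hsub (Set.toFinite _)
      _ = 1 := Set.ncard_singleton y

/-! ### Connectivity of the complements -/

lemma reach_avoidA {x : V} {A : Set V}
    (hcl : ∀ a ∈ A, ∀ b, T.Adj a b → b ∈ A ∪ {x}) {u : V}
    (h : Relation.ReflTransGen T.Adj u x) (hu : u ∉ A) : ReachIn T Aᶜ u x := by
  revert hu
  induction h using Relation.ReflTransGen.head_induction_on with
  | refl => exact fun _ => ReachIn.refl
  | @head a b hadj hrtg ih =>
      intro ha
      by_cases hbA : b ∈ A
      · rcases hcl b hbA a hadj.symm with h1 | h1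
        · exact absurd h1 ha
        · rw [h1]; exact ReachIn.refl
      · exact ReachIn.head ha hbA hadj (ih hbA)

lemma reach_avoidB {x y : V} {A : Set V}
    (hcl : ∀ a ∈ A, ∀ b, T.Adj a b → b ∈ A ∪ {x})
    (hNx : ∀ b, T.Adj x b → b ∈ A ∪ {y}) {u : V}
    (h : Relation.ReflTransGen T.Adj u x) (hu : u ∉ A ∪ {x}) :
    ReachIn T (A ∪ {x})ᶜ u y := by
  revert hu
  induction h using Relation.ReflTransGen.head_induction_on with
  | refl => exact fun hu => absurd (Or.inr rfl) hu
  | @head a b hadj hrtg ih =>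
      intro ha
      by_cases hbx : b = x
      · subst hbx
        rcases hNx a hadj.symm with h1 | h1
        · exact absurd (Or.inl h1) ha
        · rw [h1]; exact ReachIn.refl
      · by_cases hbA : b ∈ A
        · exact absurd (hcl b hbA a hadj.symm) ha
        · have hbB : b ∉ A ∪ {x} := by simp [hbA, hbx]
          exact ReachIn.head ha hbB hadj (ih hbB)

end Paper


namespace Paper

open SimpleGraph Set

variable {V : Type*} {T : SimpleGraph V}

/-! ### Degree and counting lemmas -/

lemma deg_eq_ncard (T : SimpleGraph V) (v : V) : deg T v = (T.neighborSet v).ncard :=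
  Nat.card_coe_set_eq _

lemma deg_induce (S : Set V) (v : ↥S) :
    deg (T.induce S) v = (S ∩ T.neighborSet ↑v).ncard := by
  rw [deg, ← Nat.card_coe_set_eq]
  exact Nat.card_congr
    { toFun := fun w => ⟨w.1.1, w.1.2, w.2⟩
      invFun := fun z => ⟨⟨z.1, z.2.1⟩, z.2.2⟩
      left_inv := fun w => rfl
      right_inv := fun z => rfl }

lemma deg_induce_le [Finite V] (S : Set V) (v : ↥S) : deg (T.induce S) v ≤ deg T ↑v := by
  rw [deg_induce, deg_eq_ncard]
  exact Set.ncard_le_ncard Set.inter_subset_right (Set.toFinite _)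

lemma deg_split [Finite V] (A : Set V) (T : SimpleGraph V) (v : V) :
    deg T v = (Aᶜ ∩ T.neighborSet v).ncard + (A ∩ T.neighborSet v).ncard := by
  rw [deg_eq_ncard, ← Set.ncard_union_eq
    (Disjoint.mono Set.inter_subset_left Set.inter_subset_left disjoint_compl_left)
    (Set.toFinite _) (Set.toFinite _)]
  rw [← Set.union_inter_distrib_right, Set.compl_union_self, Set.univ_inter]

lemma two_mul_edgeCount [Fintype V] (T : SimpleGraph V) : 2 * edgeCount T = ∑ v, deg T v := by
  classical
  have h1 : edgeCount T = T.edgeFinset.card := by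
    rw [edgeCount, Nat.card_eq_fintype_card, edgeFinset_card]
  have h2 : ∀ v, deg T v = T.degree v := fun v => by
    rw [deg, Nat.card_eq_fintype_card, card_neighborSet_eq_degree]
  rw [h1, ← sum_degrees_eq_twice_card_edges]
  exact Finset.sum_congr rfl (fun v _ => (h2 v).symm)

lemma sum_split [Fintype V] (A : Set V) (g : V → ℕ) [Fintype ↥A] [Fintype ↥(Aᶜ)] :
    ∑ v, g v = (∑ v : ↥(Aᶜ), g ↑v) + (∑ v : ↥A, g ↑v) := by
  classical
  rw [← Finset.sum_add_sum_compl A.toFinset g]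
  have h1 : ∑ i ∈ A.toFinset, g i = ∑ v : ↥A, g ↑v :=
    Finset.sum_subtype (p := (· ∈ A)) A.toFinset (by simp) g
  have h2 : ∑ i ∈ A.toFinsetᶜ, g i = ∑ v : ↥(Aᶜ), g ↑v :=
    Finset.sum_subtype (p := (· ∈ Aᶜ)) A.toFinsetᶜ (by simp) g
  rw [h1, h2]
  exact Nat.add_comm _ _

lemma sum_insert_set [Fintype V] {A : Set V} {x : V} (hx : x ∉ A) (g : V → ℕ)
    [Fintype ↥A] [Fintype ↥(A ∪ {x} : Set V)] :
    (∑ v : ↥(A ∪ {x} : Set V), g ↑v) = g x + ∑ v : ↥A, g ↑v := by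
  classical
  rw [← Finset.sum_subtype (p := (· ∈ (A ∪ {x} : Set V))) (A ∪ {x}).toFinset (by simp) g,
    ← Finset.sum_subtype (p := (· ∈ A)) A.toFinset (by simp) g]
  have h : (A ∪ {x}).toFinset = insert x A.toFinset := by
    ext z; simp [Set.union_singleton]
  rw [h, Finset.sum_insert (by simpa using hx)]

lemma card_coe_eq_ncard (S : Set V) [Fintype ↥S] : Fintype.card ↥S = S.ncard := by
  rw [← Nat.card_eq_fintype_card, Nat.card_coe_set_eq]

lemma card_split [Fintype V] (A : Set V) : Fintype.card V = A.ncard + Aᶜ.ncard := by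
  rw [Set.ncard_add_ncard_compl A, Nat.card_eq_fintype_card]

/-! ### Independence number lemmas -/

lemma indep_bddAbove [Fintype V] (G : SimpleGraph V) :
    BddAbove {n | ∃ s : Finset V, IsIndepSet G ↑s ∧ s.card = n} :=
  ⟨Fintype.card V, by rintro n ⟨s, _, rfl⟩; exact Finset.card_le_univ s⟩

lemma le_indepNum [Fintype V] {G : SimpleGraph V} {s : Finset V} (h : IsIndepSet G ↑s) :
    s.card ≤ indepNum G := le_csSup (indep_bddAbove G) ⟨s, h, rfl⟩

lemma exists_indep_finset [Fintype V] (G : SimpleGraph V) :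
    ∃ s : Finset V, IsIndepSet G ↑s ∧ s.card = indepNum G :=
  Nat.sSup_mem ⟨0, show ∃ s : Finset V, IsIndepSet G ↑s ∧ s.card = 0 from
    ⟨∅, fun u hu => absurd hu (by simp), rfl⟩⟩ (indep_bddAbove G)

lemma indepNum_le_of_map {W₁ W₂ : Type*} [Fintype W₁] [Fintype W₂]
    {G₁ : SimpleGraph W₁} {G₂ : SimpleGraph W₂}
    (f : W₁ → W₂) (hinj : Function.Injective f)
    (hadj : ∀ u v, G₂.Adj (f u) (f v) → G₁.Adj u v) : indepNum G₁ ≤ indepNum G₂ := by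
  classical
  obtain ⟨s, hs, hcard⟩ := exists_indep_finset G₁
  rw [← hcard]
  have hind : IsIndepSet G₂ ↑(s.image f) := by
    intro u hu v hv hadj'
    simp only [Finset.coe_image, Set.mem_image, Finset.mem_coe] at hu hv
    obtain ⟨a, ha, rfl⟩ := hu
    obtain ⟨b, hb, rfl⟩ := hv
    exact hs ha hb (hadj a b hadj')
  calc s.card = (s.image f).card := (Finset.card_image_of_injective s hinj).symm
    _ ≤ indepNum G₂ := le_indepNum hind

lemma indepNum_iso {W₁ W₂ : Type*} [Fintype W₁] [Fintype W₂]
    {G₁ : SimpleGraph W₁} {G₂ : SimpleGraph W₂} (e : G₁ ≃g G₂) :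
    indepNum G₁ = indepNum G₂ :=
  le_antisymm
    (indepNum_le_of_map e e.toEquiv.injective (fun _ _ h => e.map_rel_iff.mp h))
    (indepNum_le_of_map e.symm e.symm.toEquiv.injective (fun _ _ h => e.symm.map_rel_iff.mp h))

lemma indepNum_mono [Fintype V] (T : SimpleGraph V) {D₁ D₂ : Set V} (h : D₁ ⊆ D₂) :
    indepNum (T.induce D₁) ≤ indepNum (T.induce D₂) := by
  classical
  exact indepNum_le_of_map (Set.inclusion h) (Set.inclusion_injective h) (fun u v hadj => hadj)

lemma indepNum_double [Fintype V] (T : SimpleGraph V) (S : Set V) (D₀ : Set ↥S) :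
    indepNum ((T.induce S).induce D₀) = indepNum (T.induce (Subtype.val '' D₀)) := by
  classical
  exact indepNum_iso (induceInduceIso T S D₀)

lemma indepNum_plus_one [Fintype V] (T : SimpleGraph V) {J D : Set V} {x : V}
    (hJD : J ⊆ D) (hxD : x ∈ D) (hxJ : x ∉ J) (hnadj : ∀ u ∈ J, ¬ T.Adj x u) :
    indepNum (T.induce J) + 1 ≤ indepNum (T.induce D) := by
  classical
  obtain ⟨s, hs, hcard⟩ := exists_indep_finset (T.induce J)
  set f : ↥J → ↥D := Set.inclusion hJD with hf
  set t : Finset ↥D := insert ⟨x, hxD⟩ (s.image f) with ht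
  have hxim : (⟨x, hxD⟩ : ↥D) ∉ s.image f := by
    intro h
    simp only [Finset.mem_image] at h
    obtain ⟨u, _hu, he⟩ := h
    have hux : (u : V) = x := congrArg Subtype.val he
    exact hxJ (hux ▸ u.2)
  have hcardt : t.card = s.card + 1 := by
    rw [ht, Finset.card_insert_of_notMem hxim,
      Finset.card_image_of_injective _ (Set.inclusion_injective hJD)]
  have hind : IsIndepSet (T.induce D) ↑t := by
    intro u hu v hv hadj
    simp only [ht, Finset.coe_insert, Set.mem_insert_iff, Finset.coe_image, Set.mem_image,
      Finset.mem_coe] at hu hv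
    have hTadj : T.Adj ↑u ↑v := hadj
    rcases hu with rfl | ⟨a, ha, rfl⟩ <;> rcases hv with rfl | ⟨b, hb, rfl⟩
    · exact T.loopless.irrefl _ hTadj
    · exact hnadj _ b.2 hTadj
    · exact hnadj _ a.2 hTadj.symm
    · exact hs ha hb hTadj
  calc indepNum (T.induce J) + 1 = t.card := by rw [hcardt, hcard]
    _ ≤ _ := le_indepNum hind

end Paper


namespace Paper

open SimpleGraph Set

variable {V : Type*} {T : SimpleGraph V}

lemma deg_top_fin (k : ℕ) (w : Fin k) : deg (⊤ : SimpleGraph (Fin k)) w = k - 1 := by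
  have h1 : (⊤ : SimpleGraph (Fin k)).neighborSet w = {w}ᶜ := by
    ext u; simp [SimpleGraph.neighborSet, SimpleGraph.top_adj, eq_comm]
  have h2 := Set.ncard_add_ncard_compl ({w} : Set (Fin k))
  rw [deg_eq_ncard, h1]
  simp only [Set.ncard_singleton, Nat.card_eq_fintype_card, Fintype.card_fin] at h2 ⊢
  omega

lemma not_iso_top_of_deg {k : ℕ} (hk : 4 ≤ k) (G : SimpleGraph V) (v : V)
    (hv : deg G v ≤ k - 2) : IsEmpty (G ≃g (⊤ : SimpleGraph (Fin k))) := by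
  constructor
  intro e
  have h := deg_iso e v
  rw [deg_top_fin] at h
  omega

lemma adj_of_induce_top {B : Set V} (h : T.induce B = ⊤) {u w : V}
    (hu : u ∈ B) (hw : w ∈ B) (hne : u ≠ w) : T.Adj u w := by
  have : (T.induce B).Adj ⟨u, hu⟩ ⟨w, hw⟩ := by
    rw [h]
    simp [SimpleGraph.top_adj, hne]
  exact this

lemma deg_zero_of_subsingleton [Fintype V] (h : Fintype.card V ≤ 1) (v : V) : deg T v = 0 := by
  have : T.neighborSet v = ∅ := by
    ext w
    simp only [SimpleGraph.mem_neighborSet, Set.mem_empty_iff_false, iff_false]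
    intro hadj
    exact hadj.ne (Fintype.card_le_one_iff.mp h v w)
  rw [deg_eq_ncard, this, Set.ncard_empty]

end Paper


namespace Paper

open SimpleGraph Set

universe u

variable {V : Type u} {T : SimpleGraph V}

/-- Abbreviation for sums of degrees over a set. -/
noncomputable def sdeg [Fintype V] (T : SimpleGraph V) (A : Set V) : ℕ :=
  ∑ v ∈ A.toFinite.toFinset, deg T v

lemma sdeg_eq [Fintype V] (T : SimpleGraph V) (A : Set V) [Fintype ↥A] :
    sdeg T A = ∑ v : ↥A, deg T ↑v :=
  Finset.sum_subtype _ (fun x => A.toFinite.mem_toFinset) _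

/-- The inductive step where the interior `A` of an endblock is removed. -/
lemma removeA_step [Fintype V] {m : ℕ} (hm : 2 ≤ m)
    (hGallai : IsGallaiTree T) (hΔ : ∀ v, deg T v ≤ m + 1)
    {x : V} {A : Set V} (hxA : x ∉ A)
    (hadjx : ∃ a ∈ A, T.Adj x a)
    (hcl : ∀ a ∈ A, ∀ b, T.Adj a b → b ∈ A ∪ {x})
    (hA1 : 1 ≤ A.ncard)
    (harith : (A ∩ T.neighborSet x).ncard + sdeg T A ≤ m * A.ncard)
    (hIH : ∀ (W : Type u) [Fintype W], Fintype.card W ≤ Fintype.card V - 1 →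
      ∀ (T' : SimpleGraph W), IsGallaiTree T' →
        IsEmpty (T' ≃g (⊤ : SimpleGraph (Fin (m + 2)))) → (∀ v, deg T' v ≤ m + 1) →
        2 * edgeCount T' ≤ m * Fintype.card W +
          2 * indepNum (T'.induce {v | deg T' v = m + 1})) :
    2 * edgeCount T ≤ m * Fintype.card V +
      2 * indepNum (T.induce {v | deg T v = m + 1}) := by
  classical
  set S := Aᶜ with hSdef
  have hxS : x ∈ S := hxA
  have hT'conn : (T.induce S).Connected :=
    induce_connected_of_reach_to_hub hxS (fun u hu => reach_avoidA hcl
      ((reachable_iff_reflTransGen u x).mp (hGallai.1.preconnected u x)) hu)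
  have hT'gallai : IsGallaiTree (T.induce S) :=
    isGallaiTree_induce hGallai S hT'conn (hsepA hxA hcl)
  -- degree bookkeeping
  have hdegS : ∀ v : ↥S, deg (T.induce S) v + (A ∩ T.neighborSet ↑v).ncard = deg T ↑v := by
    intro v
    rw [deg_induce]
    exact (deg_split A T ↑v).symm
  have haxpos : 1 ≤ (A ∩ T.neighborSet x).ncard := by
    obtain ⟨a, haA, hadj⟩ := hadjx
    exact (Set.ncard_pos (Set.toFinite _)).mpr ⟨a, haA, hadj⟩
  have hdegT'x_le : deg (T.induce S) ⟨x, hxS⟩ ≤ m := by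
    have h1 : deg (T.induce S) ⟨x, hxS⟩ + (A ∩ T.neighborSet x).ncard = deg T x :=
      hdegS ⟨x, hxS⟩
    have h2 := hΔ x
    omega
  have hAempty : ∀ v : ↥S, (v : V) ≠ x → A ∩ T.neighborSet ↑v = ∅ := by
    intro v hvx
    ext a
    simp only [Set.mem_inter_iff, SimpleGraph.mem_neighborSet, Set.mem_empty_iff_false,
      iff_false, not_and]
    intro haA hadj
    rcases hcl a haA ↑v hadj.symm with h | h
    · exact v.2 h
    · exact hvx h
  have hdegSother : ∀ v : ↥S, (v : V) ≠ x → deg (T.induce S) v = deg T ↑v := by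
    intro v hvx
    have h1 := hdegS v
    rw [hAempty v hvx, Set.ncard_empty] at h1
    omega
  have hT'ne : IsEmpty ((T.induce S) ≃g (⊤ : SimpleGraph (Fin (m + 2)))) := by
    refine not_iso_top_of_deg (by omega) _ ⟨x, hxS⟩ ?_
    have : m + 2 - 2 = m := by omega
    rw [this]
    exact hdegT'x_le
  have hT'Δ : ∀ v, deg (T.induce S) v ≤ m + 1 := fun v => le_trans (deg_induce_le S v) (hΔ ↑v)
  have hcardsplit : Fintype.card V = A.ncard + S.ncard := by
    rw [hSdef]; exact card_split A
  have hcardS : Fintype.card ↥S = Fintype.card V - A.ncard := by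
    rw [card_coe_eq_ncard]; omega
  have hcardpos : A.ncard ≤ Fintype.card V := by omega
  have hmain := hIH ↥S (by omega) (T.induce S) hT'gallai hT'ne hT'Δ
  -- sums
  have hsum := sum_split A (deg T)
  have hsumS : ∑ v : ↥S, deg T ↑v =
      (∑ v : ↥S, deg (T.induce S) v) + (A ∩ T.neighborSet x).ncard := by
    have hpt : ∀ v : ↥S, deg T ↑v = deg (T.induce S) v + (A ∩ T.neighborSet ↑v).ncard :=
      fun v => (hdegS v).symm
    rw [Finset.sum_congr rfl (fun v _ => hpt v), Finset.sum_add_distrib]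
    congr 1
    rw [Finset.sum_eq_single (⟨x, hxS⟩ : ↥S)]
    · intro b _ hbx
      have hbx' : (b : V) ≠ x := fun h => hbx (Subtype.ext h)
      rw [hAempty b hbx', Set.ncard_empty]
    · intro h; exact absurd (Finset.mem_univ _) h
  -- independence number bookkeeping
  have himg : Subtype.val '' {v : ↥S | deg (T.induce S) v = m + 1} ⊆ {v | deg T v = m + 1} := by
    rintro w ⟨v, hv, rfl⟩
    by_cases hvx : (v : V) = x
    · exfalso
      have hvv : v = ⟨x, hxS⟩ := Subtype.ext hvx
      rw [hvv] at hv
      have := hdegT'x_le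
      simp only [Set.mem_setOf_eq] at hv
      omega
    · have := hdegSother v hvx
      simp only [Set.mem_setOf_eq] at hv ⊢
      omega
  have hβ : indepNum ((T.induce S).induce {v : ↥S | deg (T.induce S) v = m + 1}) ≤
      indepNum (T.induce {v | deg T v = m + 1}) := by
    rw [indepNum_double]
    exact indepNum_mono T himg
  -- final arithmetic
  have e1 : 2 * edgeCount T = ∑ v, deg T v := two_mul_edgeCount T
  have e2 : 2 * edgeCount (T.induce S) = ∑ v : ↥S, deg (T.induce S) v :=
    two_mul_edgeCount (T.induce S)
  have hsA : sdeg T A = ∑ v : ↥A, deg T ↑v := sdeg_eq T A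
  have hprod : m * Fintype.card V = m * Fintype.card ↥S + m * A.ncard := by
    rw [card_coe_eq_ncard]
    rw [← Nat.mul_add]
    congr 1
    omega
  calc 2 * edgeCount T
      = (∑ v : ↥S, deg (T.induce S) v) + ((A ∩ T.neighborSet x).ncard + sdeg T A) := by
        rw [e1, hsum, hsumS, hsA]; omega
    _ = 2 * edgeCount (T.induce S) + ((A ∩ T.neighborSet x).ncard + sdeg T A) := by rw [e2]
    _ ≤ (m * Fintype.card ↥S +
          2 * indepNum ((T.induce S).induce {v : ↥S | deg (T.induce S) v = m + 1})) +
          m * A.ncard := Nat.add_le_add hmain harith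
    _ ≤ (m * Fintype.card ↥S + m * A.ncard) +
          2 * indepNum (T.induce {v | deg T v = m + 1}) := by
        have := hβ; omega
    _ = m * Fintype.card V + 2 * indepNum (T.induce {v | deg T v = m + 1}) := by
        rw [hprod]

end Paper


namespace Paper

open SimpleGraph Set

universe u

variable {V : Type u} {T : SimpleGraph V}

/-- The inductive step where a whole endblock `A ∪ {x}` is removed
(used when `x` has a unique neighbour `y` outside). -/
lemma removeB_step [Fintype V] {m : ℕ} (hm : 2 ≤ m)
    (hGallai : IsGallaiTree T) (hΔ : ∀ v, deg T v ≤ m + 1)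
    {x y : V} {A : Set V} (hxA : x ∉ A)
    (hcl : ∀ a ∈ A, ∀ b, T.Adj a b → b ∈ A ∪ {x})
    (hNx : Aᶜ ∩ T.neighborSet x = {y})
    (hdegx : deg T x = m + 1)
    (harith : deg T x + sdeg T A + 1 ≤ m * (A.ncard + 1) + 2)
    (hIH : ∀ (W : Type u) [Fintype W], Fintype.card W ≤ Fintype.card V - 1 →
      ∀ (T' : SimpleGraph W), IsGallaiTree T' →
        IsEmpty (T' ≃g (⊤ : SimpleGraph (Fin (m + 2)))) → (∀ v, deg T' v ≤ m + 1) →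
        2 * edgeCount T' ≤ m * Fintype.card W +
          2 * indepNum (T'.induce {v | deg T' v = m + 1})) :
    2 * edgeCount T ≤ m * Fintype.card V +
      2 * indepNum (T.induce {v | deg T v = m + 1}) := by
  classical
  set B := A ∪ {x} with hBdef
  set S := Bᶜ with hSdef
  have hyy : y ∈ Aᶜ ∩ T.neighborSet x := by rw [hNx]; rfl
  have hyA : y ∉ A := hyy.1
  have hyadj : T.Adj x y := hyy.2
  have hxy : x ≠ y := hyadj.ne
  have hxB : x ∈ B := Or.inr rfl
  have hyB : y ∉ B := by
    rintro (h | h)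
    · exact hyA h
    · exact hxy (h.symm)
  have hyS : y ∈ S := hyB
  have hNxsub : ∀ b, T.Adj x b → b ∈ A ∪ {y} := by
    intro b hadj
    by_cases hbA : b ∈ A
    · exact Or.inl hbA
    · have : b ∈ Aᶜ ∩ T.neighborSet x := ⟨hbA, hadj⟩
      rw [hNx] at this
      exact Or.inr this
  -- connectivity of the complement of B
  have hT'conn : (T.induce S).Connected :=
    induce_connected_of_reach_to_hub hyS (fun u hu => reach_avoidB hcl hNxsub
      ((reachable_iff_reflTransGen u x).mp (hGallai.1.preconnected u x)) hu)
  have hT'gallai : IsGallaiTree (T.induce S) :=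
    isGallaiTree_induce hGallai S hT'conn (hsepB hxA hcl hNxsub hxy)
  -- degree bookkeeping
  have hdegS : ∀ v : ↥S, deg (T.induce S) v + (B ∩ T.neighborSet ↑v).ncard = deg T ↑v := by
    intro v
    rw [deg_induce]
    exact (deg_split B T ↑v).symm
  have hBempty : ∀ v : ↥S, (v : V) ≠ y → B ∩ T.neighborSet ↑v = ∅ := by
    intro v hvy
    have hvB : (v : V) ∉ B := v.2
    ext b
    simp only [Set.mem_inter_iff, SimpleGraph.mem_neighborSet, Set.mem_empty_iff_false,
      iff_false, not_and]
    intro hbB hadj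
    rcases hbB with hbA | hbx
    · exact hvB (hcl b hbA ↑v hadj.symm)
    · rw [Set.mem_singleton_iff] at hbx
      subst hbx
      rcases hNxsub ↑v hadj.symm with h | h
      · exact hvB (Or.inl h)
      · exact hvy h
  have hBy : B ∩ T.neighborSet y = {x} := by
    ext b
    simp only [Set.mem_inter_iff, SimpleGraph.mem_neighborSet, Set.mem_singleton_iff]
    constructor
    · rintro ⟨hbB, hadj⟩
      rcases hbB with hbA | hbx
      · exact absurd (hcl b hbA y hadj.symm) (by
          rintro (h | h)
          · exact hyA h
          · exact hxy h.symm)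
      · exact hbx
    · rintro rfl
      exact ⟨hxB, hyadj.symm⟩
  have hdegSother : ∀ v : ↥S, (v : V) ≠ y → deg (T.induce S) v = deg T ↑v := by
    intro v hvy
    have h1 := hdegS v
    rw [hBempty v hvy, Set.ncard_empty] at h1
    omega
  have hdegy : deg (T.induce S) ⟨y, hyS⟩ + 1 = deg T y := by
    have h1 : deg (T.induce S) ⟨y, hyS⟩ + (B ∩ T.neighborSet y).ncard = deg T y :=
      hdegS ⟨y, hyS⟩
    rw [hBy, Set.ncard_singleton] at h1
    exact h1
  have hdegy_le : deg (T.induce S) ⟨y, hyS⟩ ≤ m := by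
    have := hΔ y
    omega
  have hT'ne : IsEmpty ((T.induce S) ≃g (⊤ : SimpleGraph (Fin (m + 2)))) := by
    refine not_iso_top_of_deg (by omega) _ ⟨y, hyS⟩ ?_
    have h2 : m + 2 - 2 = m := by omega
    rw [h2]
    exact hdegy_le
  have hT'Δ : ∀ v, deg (T.induce S) v ≤ m + 1 := fun v => le_trans (deg_induce_le S v) (hΔ ↑v)
  -- cardinalities
  have hBcard : B.ncard = A.ncard + 1 := by
    rw [hBdef, Set.union_singleton, Set.ncard_insert_of_notMem hxA]
  have hcardsplit : Fintype.card V = B.ncard + S.ncard := by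
    rw [hSdef]; exact card_split B
  have hcardS : Fintype.card ↥S = S.ncard := card_coe_eq_ncard S
  have hmain := hIH ↥S (by omega) (T.induce S) hT'gallai hT'ne hT'Δ
  -- sums
  have hsum : ∑ v, deg T v = (∑ v : ↥S, deg T ↑v) + (∑ v : ↥B, deg T ↑v) := by
    exact sum_split B (deg T)
  have hsumB : ∑ v : ↥B, deg T ↑v = deg T x + ∑ v : ↥A, deg T ↑v := by
    exact sum_insert_set hxA (deg T)
  have hsumS : ∑ v : ↥S, deg T ↑v = (∑ v : ↥S, deg (T.induce S) v) + 1 := by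
    have hpt : ∀ v : ↥S, deg T ↑v = deg (T.induce S) v + (B ∩ T.neighborSet ↑v).ncard :=
      fun v => (hdegS v).symm
    rw [Finset.sum_congr rfl (fun v _ => hpt v), Finset.sum_add_distrib]
    congr 1
    rw [Finset.sum_eq_single (⟨y, hyS⟩ : ↥S)]
    · rw [hBy, Set.ncard_singleton]
    · intro b _ hby
      have hby' : (b : V) ≠ y := fun h => hby (Subtype.ext h)
      rw [hBempty b hby', Set.ncard_empty]
    · intro h; exact absurd (Finset.mem_univ _) h
  -- independence number bookkeeping
  have himg : Subtype.val '' {v : ↥S | deg (T.induce S) v = m + 1} ⊆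
      {v | deg T v = m + 1} \ ({y} : Set V) := by
    rintro w ⟨v, hv, rfl⟩
    simp only [Set.mem_setOf_eq] at hv
    by_cases hvy : (v : V) = y
    · exfalso
      have hvv : v = ⟨y, hyS⟩ := Subtype.ext hvy
      rw [hvv] at hv
      omega
    · refine ⟨?_, by simpa using hvy⟩
      have := hdegSother v hvy
      simp only [Set.mem_setOf_eq]
      omega
  have hJD : Subtype.val '' {v : ↥S | deg (T.induce S) v = m + 1} ⊆ {v | deg T v = m + 1} :=
    fun w hw => (himg hw).1
  have hxD : x ∈ {v | deg T v = m + 1} := hdegx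
  have hxJ : x ∉ Subtype.val '' {v : ↥S | deg (T.induce S) v = m + 1} := by
    rintro ⟨v, _, hvx⟩
    exact v.2 (hvx ▸ hxB)
  have hnadj : ∀ u ∈ Subtype.val '' {v : ↥S | deg (T.induce S) v = m + 1}, ¬ T.Adj x u := by
    rintro u hu hadj
    have h2 := himg hu
    obtain ⟨v, _, rfl⟩ := hu
    have huy : (v : V) ≠ y := fun h => (h2.2 (by simpa using h))
    rcases hNxsub ↑v hadj with h | h
    · exact v.2 (Or.inl h)
    · exact huy h
  have hβ : indepNum ((T.induce S).induce {v : ↥S | deg (T.induce S) v = m + 1}) + 1 ≤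
      indepNum (T.induce {v | deg T v = m + 1}) := by
    rw [indepNum_double]
    exact indepNum_plus_one T hJD hxD hxJ hnadj
  -- final assembly
  have e1 : 2 * edgeCount T = ∑ v, deg T v := two_mul_edgeCount T
  have e2 : 2 * edgeCount (T.induce S) = ∑ v : ↥S, deg (T.induce S) v :=
    two_mul_edgeCount (T.induce S)
  have hsA : sdeg T A = ∑ v : ↥A, deg T ↑v := sdeg_eq T A
  have hprod : m * Fintype.card V = m * Fintype.card ↥S + m * (A.ncard + 1) := by
    rw [hcardS, ← Nat.mul_add]
    congr 1
    omega
  calc 2 * edgeCount T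
      = 2 * edgeCount (T.induce S) + 1 + (deg T x + sdeg T A) := by
        rw [e1, hsum, hsumS, hsumB, e2, hsA]
    _ ≤ (m * Fintype.card ↥S +
          2 * indepNum ((T.induce S).induce {v : ↥S | deg (T.induce S) v = m + 1})) + 1 +
          (deg T x + sdeg T A) := by omega
    _ ≤ m * Fintype.card V + 2 * indepNum (T.induce {v | deg T v = m + 1}) := by
        rw [hprod]
        omega

end Paper


namespace Paper

open SimpleGraph Set

variable {V : Type*} {T : SimpleGraph V}

lemma sum_deg_zero [Fintype V] (T : SimpleGraph V) (h : Fintype.card V ≤ 1) :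
    2 * edgeCount T = 0 := by
  rw [two_mul_edgeCount]
  exact Finset.sum_eq_zero (fun v _ => deg_zero_of_subsingleton h v)

lemma exists_iso_top_fin [Fintype V] {T : SimpleGraph V} (hTtop : T = ⊤) {k : ℕ}
    (hcard : Fintype.card V = k) : Nonempty (T ≃g (⊤ : SimpleGraph (Fin k))) := by
  subst hTtop
  have e := Fintype.equivFinOfCardEq hcard
  exact ⟨⟨e, by intro a b; simp [SimpleGraph.top_adj, e.injective.ne_iff]⟩⟩

lemma sdeg_const [Fintype V] (T : SimpleGraph V) (A : Set V) {c : ℕ}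
    (h : ∀ v ∈ A, deg T v = c) : sdeg T A = c * A.ncard := by
  rw [sdeg, Finset.sum_congr rfl (fun v hv => h v (A.toFinite.mem_toFinset.mp hv)),
    Finset.sum_const, smul_eq_mul, ← Set.ncard_eq_toFinset_card]
  exact Nat.mul_comm _ _

end Paper

namespace Paper

open SimpleGraph Set

variable {V : Type*} {T : SimpleGraph V}

lemma exists_outside_neighbor (hT : T.Connected) {x : V} {A : Set V}
    (hcl : ∀ a ∈ A, ∀ b, T.Adj a b → b ∈ A ∪ {x})
    (hBuniv : A ∪ {x} ≠ Set.univ) : ∃ z, z ∉ A ∪ {x} ∧ T.Adj x z := by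
  by_contra hcon
  push_neg at hcon
  have hclosed : ∀ a ∈ A ∪ {x}, ∀ b, T.Adj a b → b ∈ A ∪ {x} := by
    intro a ha b hadj
    rcases ha with haA | hax
    · exact hcl a haA b hadj
    · rw [Set.mem_singleton_iff] at hax
      subst hax
      by_contra hbB
      exact hcon b hbB hadj
  exact hBuniv (eq_univ_of_closed hT ⟨x, Or.inr rfl⟩ hclosed)

end Paper


namespace Paper

open SimpleGraph Set

universe u

theorem main_aux (n : ℕ) : ∀ (V : Type u) [Fintype V], Fintype.card V ≤ n →
    ∀ {m : ℕ}, 2 ≤ m → ∀ (T : SimpleGraph V), IsGallaiTree T →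
    IsEmpty (T ≃g (⊤ : SimpleGraph (Fin (m + 2)))) → (∀ v, deg T v ≤ m + 1) →
    2 * edgeCount T ≤ m * Fintype.card V +
      2 * indepNum (T.induce {v | deg T v = m + 1}) := by
  induction n with
  | zero =>
      intro V _ hcard m hm T _ _ _
      rw [sum_deg_zero T (by omega)]
      exact Nat.zero_le _
  | succ n ih =>
      intro V instV hcard m hm T hGallai hne hΔ
      classical
      by_cases hsmall : Fintype.card V ≤ 1
      · rw [sum_deg_zero T hsmall]; exact Nat.zero_le _
      obtain ⟨u₀, x₀, hux⟩ := Fintype.exists_pair_of_one_lt_card (show 1 < Fintype.card V by omega)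
      obtain ⟨x, A, hp, hmin⟩ := exists_minimal_goodPair (exists_goodPair hGallai.1 hux)
      obtain ⟨hAne, hxA, hAconn, hadjx, hcl⟩ := hp
      have hblock : IsBlock T (A ∪ {x}) :=
        block_of_minimal hGallai.1 ⟨hAne, hxA, hAconn, hadjx, hcl⟩ hmin
      set B := A ∪ {x} with hBdef
      have hxB : x ∈ B := Or.inr rfl
      have hAB : A ⊆ B := Set.subset_union_left
      have htB : B.ncard = A.ncard + 1 := by
        rw [hBdef, Set.union_singleton, Set.ncard_insert_of_notMem hxA]
      have hA1 : 1 ≤ A.ncard := (Set.ncard_pos (Set.toFinite _)).mpr hAne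
      have hIH' : ∀ (W : Type u) [Fintype W], Fintype.card W ≤ Fintype.card V - 1 →
          ∀ (T' : SimpleGraph W), IsGallaiTree T' →
            IsEmpty (T' ≃g (⊤ : SimpleGraph (Fin (m + 2)))) → (∀ v, deg T' v ≤ m + 1) →
            2 * edgeCount T' ≤ m * Fintype.card W +
              2 * indepNum (T'.induce {v | deg T' v = m + 1}) := by
        intro W instW hW T' h1 h2 h3
        exact ih W (by omega) hm T' h1 h2 h3
      rcases hGallai.2 B hblock with hcomp | hodd
      · -- B is a complete block
        have hadjB : ∀ u ∈ B, ∀ w ∈ B, u ≠ w → T.Adj u w :=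
          fun u hu w hw hne' => adj_of_induce_top hcomp hu hw hne'
        by_cases hBuniv : B = Set.univ
        · -- T itself is complete
          have hTtop : T = ⊤ := by
            ext u w
            constructor
            · exact fun h => h.ne
            · intro hne'
              exact hadjB u (by rw [hBuniv]; trivial) w (by rw [hBuniv]; trivial) hne'
          have hNall : ∀ v : V, T.neighborSet v = B \ {v} := by
            intro v
            ext b
            simp only [SimpleGraph.mem_neighborSet, Set.mem_diff, Set.mem_singleton_iff]
            constructor
            · intro hadj
              exact ⟨by rw [hBuniv]; trivial, fun h => T.loopless.irrefl v (h ▸ hadj)⟩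
            · rintro ⟨hbB, hbv⟩
              exact hadjB v (by rw [hBuniv]; trivial) b hbB (fun h => hbv h.symm)
          have hcardB : B.ncard = Fintype.card V := by
            rw [hBuniv, Set.ncard_univ, Nat.card_eq_fintype_card]
          have hdegall : ∀ v, deg T v = Fintype.card V - 1 := fun v => by
            rw [deg_eq_ncard, hNall v,
              Set.ncard_diff_singleton_of_mem (by rw [hBuniv]; trivial), hcardB]
          have hcardne : Fintype.card V ≠ m + 2 :=
            fun h => hne.false (exists_iso_top_fin hTtop h).some
          have hdegx := hΔ x
          rw [hdegall x] at hdegx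
          have hb : Fintype.card V - 1 ≤ m := by omega
          rw [two_mul_edgeCount]
          calc ∑ v, deg T v = ∑ _v : V, (Fintype.card V - 1) :=
                Finset.sum_congr rfl (fun v _ => hdegall v)
            _ = Fintype.card V * (Fintype.card V - 1) := by
                rw [Finset.sum_const, smul_eq_mul, Finset.card_univ]
            _ ≤ Fintype.card V * m := Nat.mul_le_mul_left _ hb
            _ = m * Fintype.card V := Nat.mul_comm _ _
            _ ≤ _ := Nat.le_add_right _ _
        · -- B ≠ univ : endblock situation
          have degA : ∀ v ∈ A, deg T v = A.ncard := by
            intro v hv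
            have hNA : T.neighborSet v = B \ {v} := by
              ext b
              simp only [SimpleGraph.mem_neighborSet, Set.mem_diff, Set.mem_singleton_iff]
              constructor
              · intro hadj
                exact ⟨hcl v hv b hadj, fun h => T.loopless.irrefl v (h ▸ hadj)⟩
              · rintro ⟨hbB, hbv⟩
                exact hadjB v (hAB hv) b hbB (fun h => hbv h.symm)
            rw [deg_eq_ncard, hNA, Set.ncard_diff_singleton_of_mem (hAB hv), htB]
            omega
          have hsdeg : sdeg T A = A.ncard * A.ncard := sdeg_const T A degA
          have hAx : A ∩ T.neighborSet x = A :=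
            Set.inter_eq_left.mpr
              (fun a ha => hadjB x hxB a (hAB ha) (fun h => hxA (h ▸ ha)))
          obtain ⟨z, hzB, hxz⟩ := exists_outside_neighbor hGallai.1 hcl hBuniv
          have hzx : z ∈ Aᶜ ∩ T.neighborSet x := ⟨fun h => hzB (hAB h), hxz⟩
          have hsplitx : deg T x = (Aᶜ ∩ T.neighborSet x).ncard + (A ∩ T.neighborSet x).ncard :=
            deg_split A T x
          have hpos : 1 ≤ (Aᶜ ∩ T.neighborSet x).ncard :=
            (Set.ncard_pos (Set.toFinite _)).mpr ⟨z, hzx⟩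
          have hΔx := hΔ x
          have hAm : A.ncard ≤ m := by rw [hAx] at hsplitx; omega
          by_cases hAlt : A.ncard < m
          · refine removeA_step hm hGallai hΔ hxA hadjx hcl hA1 ?_ hIH'
            rw [hsdeg, hAx]
            calc A.ncard + A.ncard * A.ncard = (1 + A.ncard) * A.ncard := by ring
              _ ≤ m * A.ncard := Nat.mul_le_mul_right _ (by omega)
          · have hAm' : A.ncard = m := by omega
            have hone : (Aᶜ ∩ T.neighborSet x).ncard = 1 := by
              rw [hAx, hAm'] at hsplitx; omega
            obtain ⟨y, hy⟩ := Set.ncard_eq_one.mp hone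
            have hdegx : deg T x = m + 1 := by
              rw [hAx, hAm', hone] at hsplitx; omega
            refine removeB_step hm hGallai hΔ hxA hcl hy hdegx ?_ hIH'
            rw [hsdeg, hdegx, hAm']
            exact le_of_eq (by ring)
      · -- B is an odd cycle block
        have hNB : ∀ v (hv : v ∈ B), (B ∩ T.neighborSet v).ncard = 2 := by
          intro v hv
          have h2 := hodd.2.1 ⟨v, hv⟩
          rwa [deg_induce] at h2
        have degA : ∀ v ∈ A, deg T v = 2 := by
          intro v hv
          have hsplit := deg_split B T v
          have hempty : Bᶜ ∩ T.neighborSet v = ∅ := by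
            ext b
            simp only [Set.mem_inter_iff, Set.mem_compl_iff, SimpleGraph.mem_neighborSet,
              Set.mem_empty_iff_false, iff_false, not_and]
            intro hbB hadj
            exact hbB (hcl v hv b hadj)
          rw [hempty, Set.ncard_empty, hNB v (hAB hv)] at hsplit
          omega
        have hsdeg : sdeg T A = 2 * A.ncard := sdeg_const T A degA
        have hAxB : A ∩ T.neighborSet x = B ∩ T.neighborSet x := by
          ext b
          simp only [Set.mem_inter_iff, SimpleGraph.mem_neighborSet]
          constructor
          · rintro ⟨h1, h2⟩; exact ⟨hAB h1, h2⟩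
          · rintro ⟨h1, h2⟩
            rcases h1 with h | h
            · exact ⟨h, h2⟩
            · rw [Set.mem_singleton_iff] at h
              rw [h] at h2
              exact absurd h2 (T.loopless.irrefl x)
        have hax2 : (A ∩ T.neighborSet x).ncard = 2 := by rw [hAxB]; exact hNB x hxB
        have hBodd : Odd (B.ncard) := by
          have h3 := hodd.2.2
          rwa [Nat.card_coe_set_eq] at h3
        have hA2 : 2 ≤ A.ncard := by
          rw [htB, Nat.odd_iff] at hBodd
          omega
        by_cases hBuniv : B = Set.univ
        · have hdegall : ∀ v, deg T v = 2 := by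
            intro v
            have hsplit := deg_split B T v
            have hempty : Bᶜ ∩ T.neighborSet v = ∅ := by rw [hBuniv]; simp
            rw [hempty, Set.ncard_empty, hNB v (by rw [hBuniv]; trivial)] at hsplit
            omega
          rw [two_mul_edgeCount]
          calc ∑ v, deg T v = ∑ _v : V, 2 := Finset.sum_congr rfl (fun v _ => hdegall v)
            _ = Fintype.card V * 2 := by rw [Finset.sum_const, smul_eq_mul, Finset.card_univ]
            _ ≤ Fintype.card V * m := Nat.mul_le_mul_left _ hm
            _ = m * Fintype.card V := Nat.mul_comm _ _
            _ ≤ _ := Nat.le_add_right _ _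
        · obtain ⟨z, hzB, hxz⟩ := exists_outside_neighbor hGallai.1 hcl hBuniv
          have hzx : z ∈ Aᶜ ∩ T.neighborSet x := ⟨fun h => hzB (hAB h), hxz⟩
          have hsplitx : deg T x = (Aᶜ ∩ T.neighborSet x).ncard + (A ∩ T.neighborSet x).ncard :=
            deg_split A T x
          have hpos : 1 ≤ (Aᶜ ∩ T.neighborSet x).ncard :=
            (Set.ncard_pos (Set.toFinite _)).mpr ⟨z, hzx⟩
          have hΔx := hΔ x
          by_cases hm3 : 3 ≤ m
          · refine removeA_step hm hGallai hΔ hxA hadjx hcl hA1 ?_ hIH'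
            rw [hsdeg, hax2]
            calc 2 + 2 * A.ncard ≤ 3 * A.ncard := by omega
              _ ≤ m * A.ncard := Nat.mul_le_mul_right _ hm3
          · have hm2 : m = 2 := by omega
            have hone : (Aᶜ ∩ T.neighborSet x).ncard = 1 := by
              rw [hax2] at hsplitx; omega
            obtain ⟨y, hy⟩ := Set.ncard_eq_one.mp hone
            have hdegx : deg T x = m + 1 := by
              rw [hax2, hone] at hsplitx; omega
            refine removeB_step hm hGallai hΔ hxA hcl hy hdegx ?_ hIH'
            rw [hsdeg, hdegx, hm2]
            omega

end Paper


/-- If `k ≥ 4` and `T ≠ K_k` is a Gallai tree with maximum degree at most `k-1`, then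
`2‖T‖ ≤ (k-2)|T| + 2β_k(T)`, where `β_k(T)` is the independence number of the subgraph
induced on the vertices of degree exactly `k-1`. -/
theorem stmt_0 {V : Type*} [Fintype V] (k : ℕ) (hk : 4 ≤ k) (T : SimpleGraph V)
    (hGallai : IsGallaiTree T)
    (hne : IsEmpty (T ≃g (⊤ : SimpleGraph (Fin k))))
    (hΔ : ∀ v, deg T v ≤ k - 1) :
    2 * edgeCount T ≤ (k - 2) * Fintype.card V +
      2 * Paper.indepNum (T.induce {v | deg T v = k - 1}) := by
  obtain ⟨m, rfl⟩ : ∃ m, k = m + 2 := ⟨k - 2, by omega⟩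
  have hm : 2 ≤ m := by omega
  have h1 : m + 2 - 2 = m := by omega
  have h2 : m + 2 - 1 = m + 1 := by omega
  rw [h1, h2]
  exact Paper.main_aux (Fintype.card V) V le_rfl hm T hGallai hne (fun v => h2 ▸ hΔ v)
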